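/- Let n, p, q be finite index types with |n| = d, let A be a real n×p matrix, B a real n×q matrix, let γ > 0, μ > 0, and let α ∈ ℝ with −1 < α < 1. Set s = (1−α)·γ + (1+α)·μ and c = (4/(1−α²))·log(s/2) − (2/(1+α))·log γ − (2/(1−α))·log μ. Then (4/(1−α²)) · log[ det( ((1−α)/2)·(A·Aᵀ + γ·1ₙ) + ((1+α)/2)·(B·Bᵀ + μ·1ₙ) ) / ( det(A·Aᵀ + γ·1ₙ)^((1−α)/2) · det(B·Bᵀ + μ·1ₙ)^((1+α)/2) ) ] = (4/(1−α²)) · log det( (1/s)·fromBlocks ((1−α)·Aᵀ·A) (√(1−α²)·Aᵀ·B) (√(1−α²)·Bᵀ·A) ((1+α)·Bᵀ·B) + 1 ) − (2/(1+α)) · log det( (1/γ)·Aᵀ·A + 1ₚ ) − (2/(1−α)) · log det( (1/μ)·Bᵀ·B + 1_q ) + c·d. -/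

import Mathlib

set_option maxHeartbeats 1000000

open Matrix Real

lemma aux_posDef_smul {m : Type*} [Fintype m] {M : Matrix m m ℝ} (h : M.PosDef)
    {t : ℝ} (ht : 0 < t) : (t • M).PosDef := by
  refine ⟨?_, fun x hx => ?_⟩
  · unfold Matrix.IsHermitian
    rw [conjTranspose_smul, h.1.eq]
    simp
  · have h2 := mul_pos ht (h.2 hx)
    convert h2 using 1
    simp only [Finsupp.sum, Finset.mul_sum, Matrix.smul_apply, smul_eq_mul]
    refine Finset.sum_congr rfl fun i _ => Finset.sum_congr rfl fun j _ => by ring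

lemma aux_det_factor {n p : Type*} [Fintype n] [Fintype p] [DecidableEq n] [DecidableEq p]
    (A : Matrix n p ℝ) {t : ℝ} (ht : t ≠ 0) :
    (A * Aᵀ + t • (1 : Matrix n n ℝ)).det
      = t ^ Fintype.card n * ((1 / t) • (Aᵀ * A) + 1).det := by
  have h1 : A * Aᵀ + t • (1 : Matrix n n ℝ) = t • ((1 / t) • (A * Aᵀ) + 1) := by
    rw [smul_add, smul_smul]
    field_simp
    rw [one_smul]
  rw [h1, det_smul]
  congr 1
  have h2 : (1 / t) • (A * Aᵀ) = ((1 / t) • A) * Aᵀ := (Matrix.smul_mul _ _ _).symm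
  rw [h2, Matrix.det_mul_add_one_comm, Matrix.mul_smul]

theorem logdet_alpha_divergence_finite_dim
    {n p q : Type*} [Fintype n] [Fintype p] [Fintype q]
    [DecidableEq n] [DecidableEq p] [DecidableEq q]
    (d : ℕ) (hd : Fintype.card n = d)
    (A : Matrix n p ℝ) (B : Matrix n q ℝ)
    (γ μ α : ℝ) (hγ : 0 < γ) (hμ : 0 < μ) (hα₁ : -1 < α) (hα₂ : α < 1)
    (s c : ℝ)
    (hs : s = (1 - α) * γ + (1 + α) * μ)
    (hc : c = (4 / (1 - α ^ 2)) * Real.log (s / 2)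
        - (2 / (1 + α)) * Real.log γ - (2 / (1 - α)) * Real.log μ) :
    (4 / (1 - α ^ 2)) * Real.log
        ((((1 - α) / 2) • (A * Aᵀ + γ • (1 : Matrix n n ℝ)) +
            ((1 + α) / 2) • (B * Bᵀ + μ • (1 : Matrix n n ℝ))).det /
          ((A * Aᵀ + γ • (1 : Matrix n n ℝ)).det ^ ((1 - α) / 2) *
            (B * Bᵀ + μ • (1 : Matrix n n ℝ)).det ^ ((1 + α) / 2)))
    = (4 / (1 - α ^ 2)) * Real.log
          ((1 + (1 / s) •
              Matrix.fromBlocks ((1 - α) • (Aᵀ * A)) (Real.sqrt (1 - α ^ 2) • (Aᵀ * B))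
                (Real.sqrt (1 - α ^ 2) • (Bᵀ * A)) ((1 + α) • (Bᵀ * B))).det)
        - (2 / (1 + α)) * Real.log (((1 / γ) • (Aᵀ * A) + 1).det)
        - (2 / (1 - α)) * Real.log (((1 / μ) • (Bᵀ * B) + 1).det)
        + c * d := by
  have h1 : (0:ℝ) < 1 - α := by linarith
  have h2 : (0:ℝ) < 1 + α := by linarith
  have hK : (0:ℝ) < 1 - α ^ 2 := by nlinarith
  have hspos : 0 < s := by rw [hs]; positivity
  -- positive definiteness
  have hApsd : (A * Aᵀ).PosSemidef := by
    have := Matrix.posSemidef_self_mul_conjTranspose A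
    rwa [Matrix.conjTranspose_eq_transpose_of_trivial] at this
  have hBpsd : (B * Bᵀ).PosSemidef := by
    have := Matrix.posSemidef_self_mul_conjTranspose B
    rwa [Matrix.conjTranspose_eq_transpose_of_trivial] at this
  have hXpd : (A * Aᵀ + γ • (1 : Matrix n n ℝ)).PosDef :=
    Matrix.PosDef.posSemidef_add hApsd (aux_posDef_smul Matrix.PosDef.one hγ)
  have hYpd : (B * Bᵀ + μ • (1 : Matrix n n ℝ)).PosDef :=
    Matrix.PosDef.posSemidef_add hBpsd (aux_posDef_smul Matrix.PosDef.one hμ)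
  have hMpd : (((1 - α) / 2) • (A * Aᵀ + γ • (1 : Matrix n n ℝ)) +
      ((1 + α) / 2) • (B * Bᵀ + μ • (1 : Matrix n n ℝ))).PosDef :=
    (aux_posDef_smul hXpd (by positivity)).add (aux_posDef_smul hYpd (by positivity))
  -- the partitioned matrix C
  set C : Matrix n (p ⊕ q) ℝ :=
    fromCols (Real.sqrt (1 - α) • A) (Real.sqrt (1 + α) • B) with hC
  have hCCt : C * Cᵀ = (1 - α) • (A * Aᵀ) + (1 + α) • (B * Bᵀ) := by
    rw [hC, transpose_fromCols, fromCols_mul_fromRows, transpose_smul, transpose_smul,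
      Matrix.smul_mul, Matrix.smul_mul, Matrix.mul_smul, Matrix.mul_smul,
      smul_smul, smul_smul, Real.mul_self_sqrt h1.le, Real.mul_self_sqrt h2.le]
  have hsq : Real.sqrt (1 - α) * Real.sqrt (1 + α) = Real.sqrt (1 - α ^ 2) := by
    rw [← Real.sqrt_mul h1.le]
    ring_nf
  have hCtC : Cᵀ * C = Matrix.fromBlocks ((1 - α) • (Aᵀ * A)) (Real.sqrt (1 - α ^ 2) • (Aᵀ * B))
      (Real.sqrt (1 - α ^ 2) • (Bᵀ * A)) ((1 + α) • (Bᵀ * B)) := by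
    rw [hC, transpose_fromCols, fromRows_mul_fromCols, transpose_smul, transpose_smul,
      Matrix.smul_mul, Matrix.smul_mul, Matrix.smul_mul, Matrix.smul_mul,
      Matrix.mul_smul, Matrix.mul_smul, Matrix.mul_smul, Matrix.mul_smul,
      smul_smul, smul_smul, smul_smul, smul_smul,
      Real.mul_self_sqrt h1.le, Real.mul_self_sqrt h2.le, hsq, mul_comm (Real.sqrt (1 + α))]
    rw [hsq]
  -- determinant identities
  have hdetX : (A * Aᵀ + γ • (1 : Matrix n n ℝ)).det
      = γ ^ d * ((1 / γ) • (Aᵀ * A) + 1).det := by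
    rw [aux_det_factor A hγ.ne', hd]
  have hdetY : (B * Bᵀ + μ • (1 : Matrix n n ℝ)).det
      = μ ^ d * ((1 / μ) • (Bᵀ * B) + 1).det := by
    rw [aux_det_factor B hμ.ne', hd]
  have hMeq : ((1 - α) / 2) • (A * Aᵀ + γ • (1 : Matrix n n ℝ)) +
      ((1 + α) / 2) • (B * Bᵀ + μ • (1 : Matrix n n ℝ))
      = (s / 2) • ((1 / s) • (C * Cᵀ) + 1) := by
    rw [hCCt]
    match_scalars
    · field_simp
    · field_simp
      linear_combination -hs
    · field_simp
  have hdetM : (((1 - α) / 2) • (A * Aᵀ + γ • (1 : Matrix n n ℝ)) +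
      ((1 + α) / 2) • (B * Bᵀ + μ • (1 : Matrix n n ℝ))).det
      = (s / 2) ^ d * ((1 + (1 / s) •
          Matrix.fromBlocks ((1 - α) • (Aᵀ * A)) (Real.sqrt (1 - α ^ 2) • (Aᵀ * B))
            (Real.sqrt (1 - α ^ 2) • (Bᵀ * A)) ((1 + α) • (Bᵀ * B))).det) := by
    rw [hMeq, det_smul, hd]
    congr 1
    have h3 : (1 / s) • (C * Cᵀ) = ((1 / s) • C) * Cᵀ := (Matrix.smul_mul _ _ _).symm
    rw [h3, Matrix.det_mul_add_one_comm, Matrix.mul_smul, hCtC, add_comm]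
  -- scalar abbreviations
  set Dx : ℝ := ((1 / γ) • (Aᵀ * A) + 1).det with hDx'
  set Dy : ℝ := ((1 / μ) • (Bᵀ * B) + 1).det with hDy'
  set DF : ℝ := ((1 + (1 / s) •
      Matrix.fromBlocks ((1 - α) • (Aᵀ * A)) (Real.sqrt (1 - α ^ 2) • (Aᵀ * B))
        (Real.sqrt (1 - α ^ 2) • (Bᵀ * A)) ((1 + α) • (Bᵀ * B))).det) with hDF'
  have hDx : 0 < Dx := by
    have h := hXpd.det_pos
    rw [hdetX] at h
    nlinarith [pow_pos hγ d]
  have hDy : 0 < Dy := by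
    have h := hYpd.det_pos
    rw [hdetY] at h
    nlinarith [pow_pos hμ d]
  have hDF : 0 < DF := by
    have h := hMpd.det_pos
    rw [hdetM] at h
    nlinarith [pow_pos (by positivity : (0:ℝ) < s / 2) d]
  rw [hdetM, hdetX, hdetY]
  have hX1 : 0 < γ ^ d * Dx := by positivity
  have hY1 : 0 < μ ^ d * Dy := by positivity
  rw [Real.log_div (by positivity) (by positivity),
    Real.log_mul (by positivity) hDF.ne',
    Real.log_mul (ne_of_gt (Real.rpow_pos_of_pos hX1 _)) (ne_of_gt (Real.rpow_pos_of_pos hY1 _)),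
    Real.log_rpow hX1, Real.log_rpow hY1,
    Real.log_mul (by positivity) hDx.ne',
    Real.log_mul (by positivity) hDy.ne',
    Real.log_pow, Real.log_pow, Real.log_pow, hc]
  field_simp
  ring
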